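/- The bivariate generating functions B(z,x) = Σ_{n,i} b_{n,i} zⁿ xⁱ and R(z,x) = Σ_{n,i} r_{n,i} zⁿ xⁱ, where b_{n,i} (resp. r_{n,i}) is the number of B-colorings (resp. R-colorings) of size n of lambda skeletons of degree i, satisfy the identity x·R(z,x) = z·x·B(z,x) + R(z,x) − R₀(z) as formal power series in z and x, where R₀(z) = Σ_n r_{n,0} zⁿ is the part of R(z,x) of degree 0 in x. -/

import Mathlib

/-- Lambda skeletons `Λ̃(i)`, graded by degree. -/
inductive Skel : ℕ → Type
  | leaf : Skel 1
  | app : {j k : ℕ} → Skel j → Skel k → Skel (j + k)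
  | lam : {i : ℕ} → Skel (i + 1) → Skel i

/-- The two colors: `B` ("blue", neutral) and `R` ("red", normal). -/
inductive Color : Type
  | B : Color
  | R : Color
  deriving DecidableEq

/-- `Col c i p`: colorings (derivations of neutrality for `c = B`,
respectively normality for `c = R`) of the skeleton `p` of degree `i`,
by the rules (v), (a), (s), (ℓ). -/
inductive Col : Color → (i : ℕ) → Skel i → Type
  | v : Col Color.B 1 Skel.leaf
  | a {j k : ℕ} {p : Skel j} {q : Skel k} :
      Col Color.B j p → Col Color.R k q → Col Color.B (j + k) (Skel.app p q)
  | s {i : ℕ} {p : Skel i} : Col Color.B i p → Col Color.R i p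
  | l {i : ℕ} {p : Skel (i + 1)} : Col Color.R (i + 1) p → Col Color.R i (Skel.lam p)

/-- The size of a coloring: the number of uses of the s-rule in it. -/
def Col.size : {c : Color} → {i : ℕ} → {p : Skel i} → Col c i p → ℕ
  | _, _, _, Col.v => 0
  | _, _, _, Col.a d e => d.size + e.size
  | _, _, _, Col.s d => d.size + 1
  | _, _, _, Col.l d => d.size

/-- The number of colorings of color `c` and size `n` of lambda skeletons
of degree `i`. -/
noncomputable def colCount (c : Color) (n i : ℕ) : ℕ :=
  Nat.card { pp : (p : Skel i) × Col c i p // Col.size pp.2 = n }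

/-- The bivariate generating function `B(z,x)` counting B-colorings by size
(exponent of `z`, variable `0`) and degree (exponent of `x`, variable `1`). -/
noncomputable def Bgf : MvPowerSeries (Fin 2) ℚ :=
  fun d => (colCount Color.B (d 0) (d 1) : ℚ)

/-- The bivariate generating function `R(z,x)` counting R-colorings by size
(exponent of `z`, variable `0`) and degree (exponent of `x`, variable `1`). -/
noncomputable def Rgf : MvPowerSeries (Fin 2) ℚ :=
  fun d => (colCount Color.R (d 0) (d 1) : ℚ)


/-- The part `R₀(z)` of `R(z,x)` of degree 0 in `x`. -/
noncomputable def R0gf : MvPowerSeries (Fin 2) ℚ :=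
  fun d => if d 1 = 0 then (colCount Color.R (d 0) 0 : ℚ) else 0

namespace ColAux

/-- Untyped derivation trees, used to prove finiteness. -/
inductive D : Type
  | v : D
  | a : D → D → D
  | s : D → D
  | l : D → D
  deriving DecidableEq

/-- Number of nodes of an untyped derivation tree. -/
def D.nodes : D → ℕ
  | .v => 1
  | .a x y => x.nodes + y.nodes + 1
  | .s x => x.nodes + 1
  | .l x => x.nodes + 1

/-- Prefix code for untyped derivation trees. -/
def D.code : D → List (Fin 4)
  | .v => [0]
  | .a x y => 1 :: (x.code ++ y.code)
  | .s x => 2 :: x.code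
  | .l x => 3 :: x.code

theorem D.length_code : ∀ d : D, d.code.length = d.nodes
  | .v => rfl
  | .a x y => by simp [D.code, D.nodes, length_code x, length_code y]
  | .s x => by simp [D.code, D.nodes, length_code x]
  | .l x => by simp [D.code, D.nodes, length_code x]

theorem D.code_prefix : ∀ (d e : D) (l1 l2 : List (Fin 4)),
    d.code ++ l1 = e.code ++ l2 → d = e ∧ l1 = l2 := by
  intro d
  induction d with
  | v =>
    intro e l1 l2 h
    cases e with
    | v =>
      simp only [D.code, List.cons_append, List.cons.injEq] at h
      exact ⟨rfl, h.2⟩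
    | a x' y' =>
      simp only [D.code, List.cons_append, List.cons.injEq] at h
      exact absurd h.1 (by decide)
    | s x' =>
      simp only [D.code, List.cons_append, List.cons.injEq] at h
      exact absurd h.1 (by decide)
    | l x' =>
      simp only [D.code, List.cons_append, List.cons.injEq] at h
      exact absurd h.1 (by decide)
  | a x y ihx ihy =>
    intro e l1 l2 h
    cases e with
    | a x' y' =>
      simp only [D.code, List.cons_append, List.cons.injEq, List.append_assoc] at h
      obtain ⟨-, h⟩ := h
      obtain ⟨hx, h'⟩ := ihx _ _ _ h
      obtain ⟨hy, h''⟩ := ihy _ _ _ h'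
      exact ⟨by rw [hx, hy], h''⟩
    | v =>
      simp only [D.code, List.cons_append, List.cons.injEq] at h
      exact absurd h.1 (by decide)
    | s x' =>
      simp only [D.code, List.cons_append, List.cons.injEq] at h
      exact absurd h.1 (by decide)
    | l x' =>
      simp only [D.code, List.cons_append, List.cons.injEq] at h
      exact absurd h.1 (by decide)
  | s x ihx =>
    intro e l1 l2 h
    cases e with
    | s x' =>
      simp only [D.code, List.cons_append, List.cons.injEq] at h
      obtain ⟨-, h⟩ := h
      obtain ⟨hx, h'⟩ := ihx _ _ _ h
      exact ⟨by rw [hx], h'⟩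
    | v =>
      simp only [D.code, List.cons_append, List.cons.injEq] at h
      exact absurd h.1 (by decide)
    | a x' y' =>
      simp only [D.code, List.cons_append, List.cons.injEq] at h
      exact absurd h.1 (by decide)
    | l x' =>
      simp only [D.code, List.cons_append, List.cons.injEq] at h
      exact absurd h.1 (by decide)
  | l x ihx =>
    intro e l1 l2 h
    cases e with
    | l x' =>
      simp only [D.code, List.cons_append, List.cons.injEq] at h
      obtain ⟨-, h⟩ := h
      obtain ⟨hx, h'⟩ := ihx _ _ _ h
      exact ⟨by rw [hx], h'⟩
    | v =>
      simp only [D.code, List.cons_append, List.cons.injEq] at h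
      exact absurd h.1 (by decide)
    | a x' y' =>
      simp only [D.code, List.cons_append, List.cons.injEq] at h
      exact absurd h.1 (by decide)
    | s x' =>
      simp only [D.code, List.cons_append, List.cons.injEq] at h
      exact absurd h.1 (by decide)

theorem D.code_injective : Function.Injective D.code := by
  intro d e h
  have h' : d.code ++ [] = e.code ++ [] := by simp [h]
  exact (D.code_prefix d e [] [] h').1

/-- There are finitely many untyped derivation trees of bounded node count. -/
theorem finite_nodes_le (N : ℕ) : {d : D | d.nodes ≤ N}.Finite := by
  apply Set.Finite.of_finite_image (f := D.code)
  · apply (List.finite_length_le (Fin 4) N).subset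
    rintro _ ⟨d, hd, rfl⟩
    simpa [D.length_code] using hd
  · exact Function.Injective.injOn D.code_injective

/-- Erase the typing information of a coloring. -/
def eraseCol : {c : Color} → {i : ℕ} → {p : Skel i} → Col c i p → D
  | _, _, _, .v => .v
  | _, _, _, .a d e => .a (eraseCol d) (eraseCol e)
  | _, _, _, .s d => .s (eraseCol d)
  | _, _, _, .l d => .l (eraseCol d)

theorem eraseCol_inj : ∀ {c : Color} {i : ℕ} {p : Skel i} (d : Col c i p)
    {i' : ℕ} {p' : Skel i'} (e : Col c i' p'),
    eraseCol d = eraseCol e → i = i' ∧ HEq p p' ∧ HEq d e := by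
  intro c i p d
  induction d with
  | v =>
    intro i' p' e h
    cases e with
    | v => exact ⟨rfl, HEq.rfl, HEq.rfl⟩
    | a e1 e2 => simp [eraseCol] at h
  | a d1 d2 ih1 ih2 =>
    intro i' p' e h
    cases e with
    | v => simp [eraseCol] at h
    | a e1 e2 =>
      simp only [eraseCol, D.a.injEq] at h
      obtain ⟨hj, hp1, hd1⟩ := ih1 e1 h.1
      obtain ⟨hk, hp2, hd2⟩ := ih2 e2 h.2
      subst hj; subst hk
      rw [heq_iff_eq] at hp1 hp2
      subst hp1; subst hp2
      rw [heq_iff_eq] at hd1 hd2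
      subst hd1; subst hd2
      exact ⟨rfl, HEq.rfl, HEq.rfl⟩
  | s d1 ih1 =>
    intro i' p' e h
    cases e with
    | s e1 =>
      simp only [eraseCol, D.s.injEq] at h
      obtain ⟨hi, hp1, hd1⟩ := ih1 e1 h
      subst hi
      rw [heq_iff_eq] at hp1
      subst hp1
      rw [heq_iff_eq] at hd1
      subst hd1
      exact ⟨rfl, HEq.rfl, HEq.rfl⟩
    | l e1 => simp [eraseCol] at h
  | l d1 ih1 =>
    intro i' p' e h
    cases e with
    | s e1 => simp [eraseCol] at h
    | l e1 =>
      simp only [eraseCol, D.l.injEq] at h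
      obtain ⟨hi, hp1, hd1⟩ := ih1 e1 h
      have hi' : _ = i' := Nat.succ_injective hi
      subst hi'
      rw [heq_iff_eq] at hp1
      subst hp1
      rw [heq_iff_eq] at hd1
      subst hd1
      exact ⟨rfl, HEq.rfl, HEq.rfl⟩

theorem nodes_bound : ∀ {c : Color} {i : ℕ} {p : Skel i} (d : Col c i p),
    if c = Color.B then (eraseCol d).nodes + i ≤ 4 * d.size + 2
    else (eraseCol d).nodes + i + 1 ≤ 4 * d.size := by
  intro c i p d
  induction d with
  | v =>
    rw [if_pos rfl]
    simp [eraseCol, D.nodes, Col.size]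
  | a d1 d2 ih1 ih2 =>
    rw [if_pos rfl] at ih1 ⊢
    rw [if_neg (by decide)] at ih2
    simp only [eraseCol, D.nodes, Col.size]
    omega
  | s d1 ih1 =>
    rw [if_pos rfl] at ih1
    rw [if_neg (by decide)]
    simp only [eraseCol, D.nodes, Col.size]
    omega
  | l d1 ih1 =>
    rw [if_neg (by decide)] at ih1 ⊢
    simp only [eraseCol, D.nodes, Col.size]
    omega

theorem nodes_le {c : Color} {i : ℕ} {p : Skel i} (d : Col c i p) :
    (eraseCol d).nodes ≤ 4 * d.size + 2 := by
  have h := nodes_bound d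
  cases c
  · rw [if_pos rfl] at h; omega
  · rw [if_neg (by decide)] at h; omega

instance instFiniteCol (c : Color) (n i : ℕ) :
    Finite { pp : (p : Skel i) × Col c i p // Col.size pp.2 = n } := by
  haveI : Finite {dd : D // dd.nodes ≤ 4 * n + 2} := (finite_nodes_le (4 * n + 2)).to_subtype
  have hbound : ∀ pp : { pp : (p : Skel i) × Col c i p // Col.size pp.2 = n },
      (eraseCol pp.1.2).nodes ≤ 4 * n + 2 := by
    intro pp
    have h := nodes_le pp.1.2
    rw [pp.2] at h
    exact h
  refine Finite.of_injective
    (fun pp => (⟨eraseCol pp.1.2, hbound pp⟩ : {dd : D // dd.nodes ≤ 4 * n + 2})) ?_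
  rintro ⟨⟨p, d⟩, hp⟩ ⟨⟨q, e⟩, hq⟩ h
  simp only [Subtype.mk.injEq] at h
  obtain ⟨-, hpq, hde⟩ := eraseCol_inj d e h
  rw [heq_iff_eq] at hpq
  subst hpq
  rw [heq_iff_eq] at hde
  subst hde
  rfl

/-- The structural equivalence giving the recurrence. -/
def colEquiv (n i : ℕ) :
    { pp : (p : Skel i) × Col Color.R i p // Col.size pp.2 = n } ≃
    ({ pp : (p : Skel i) × Col Color.B i p // Col.size pp.2 + 1 = n } ⊕
     { pp : (p : Skel (i + 1)) × Col Color.R (i + 1) p // Col.size pp.2 = n }) where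
  toFun pp :=
    match pp with
    | ⟨⟨p, Col.s d⟩, h⟩ => Sum.inl ⟨⟨p, d⟩, h⟩
    | ⟨⟨_, Col.l d⟩, h⟩ => Sum.inr ⟨⟨_, d⟩, h⟩
  invFun x :=
    match x with
    | Sum.inl ⟨⟨p, d⟩, h⟩ => ⟨⟨p, Col.s d⟩, h⟩
    | Sum.inr ⟨⟨q, d⟩, h⟩ => ⟨⟨Skel.lam q, Col.l d⟩, h⟩
  left_inv := by
    rintro ⟨⟨p, d⟩, h⟩
    cases d with
    | s d => rfl
    | l d => rfl
  right_inv := by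
    rintro (⟨⟨p, d⟩, h⟩ | ⟨⟨q, d⟩, h⟩) <;> rfl

theorem colCount_rec (n i : ℕ) :
    colCount Color.R n i =
      (if n = 0 then 0 else colCount Color.B (n - 1) i) + colCount Color.R n (i + 1) := by
  simp only [colCount]
  rw [Nat.card_congr (colEquiv n i)]
  cases n with
  | zero =>
    haveI : IsEmpty { pp : (p : Skel i) × Col Color.B i p // Col.size pp.2 + 1 = 0 } :=
      ⟨fun pp => by omega⟩
    rw [Nat.card_sum, Nat.card_of_isEmpty]
    simp
  | succ m =>
    have e2 : { pp : (p : Skel i) × Col Color.B i p // Col.size pp.2 + 1 = m + 1 } ≃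
        { pp : (p : Skel i) × Col Color.B i p // Col.size pp.2 = m } :=
      Equiv.subtypeEquivRight (fun pp => by omega)
    haveI : Finite { pp : (p : Skel i) × Col Color.B i p // Col.size pp.2 + 1 = m + 1 } :=
      Finite.of_equiv _ e2.symm
    rw [Nat.card_sum, Nat.card_congr e2]
    simp

end ColAux

/-- Equation (2): `x·R(z,x) = z·x·B(z,x) + R(z,x) − R₀(z)` as formal power
series. -/
theorem Rgf_functional_equation :
    MvPowerSeries.X 1 * Rgf =
      MvPowerSeries.X 0 * MvPowerSeries.X 1 * Bgf + Rgf - R0gf := by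
  apply MvPowerSeries.ext
  intro d
  classical
  have hXX : (MvPowerSeries.X 0 * MvPowerSeries.X 1 : MvPowerSeries (Fin 2) ℚ) =
      MvPowerSeries.monomial (Finsupp.single 0 1 + Finsupp.single 1 1) 1 := by
    rw [MvPowerSeries.X_def, MvPowerSeries.X_def, MvPowerSeries.monomial_mul_monomial, one_mul]
  rw [map_sub, map_add, hXX, MvPowerSeries.coeff_monomial_mul, MvPowerSeries.X_def,
    MvPowerSeries.coeff_monomial_mul]
  have hR : ∀ e : Fin 2 →₀ ℕ, MvPowerSeries.coeff e Rgf = (colCount Color.R (e 0) (e 1) : ℚ) :=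
    fun e => rfl
  have hB : ∀ e : Fin 2 →₀ ℕ, MvPowerSeries.coeff e Bgf = (colCount Color.B (e 0) (e 1) : ℚ) :=
    fun e => rfl
  have hR0 : MvPowerSeries.coeff d R0gf =
      (if d 1 = 0 then (colCount Color.R (d 0) 0 : ℚ) else 0) := rfl
  rw [hR0]
  have h1 : (Finsupp.single (1 : Fin 2) 1 ≤ d) ↔ 1 ≤ d 1 := by
    constructor
    · intro h; simpa using h 1
    · intro h a
      match a with
      | 0 => simp [Finsupp.single_apply]
      | 1 => simpa [Finsupp.single_apply] using h
  have h2 : (Finsupp.single (0 : Fin 2) 1 + Finsupp.single (1 : Fin 2) 1 ≤ d) ↔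
      1 ≤ d 0 ∧ 1 ≤ d 1 := by
    constructor
    · intro h
      constructor
      · simpa [Finsupp.single_apply] using h 0
      · simpa [Finsupp.single_apply] using h 1
    · rintro ⟨h0, h1⟩ a
      match a with
      | 0 => simpa [Finsupp.single_apply] using h0
      | 1 => simpa [Finsupp.single_apply] using h1
  by_cases hd1 : 1 ≤ d 1
  · rw [if_pos (h1.mpr hd1), hR]
    have e10 : ((d - Finsupp.single (1 : Fin 2) 1 : Fin 2 →₀ ℕ)) 0 = d 0 := by
      simp [Finsupp.sub_apply, Finsupp.single_apply]
    have e11 : ((d - Finsupp.single (1 : Fin 2) 1 : Fin 2 →₀ ℕ)) 1 = d 1 - 1 := by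
      simp [Finsupp.sub_apply, Finsupp.single_apply]
    rw [e10, e11]
    rw [if_neg (by omega : ¬ d 1 = 0)]
    obtain ⟨k, hk⟩ : ∃ k, d 1 = k + 1 := ⟨d 1 - 1, by omega⟩
    rw [hR, hk]
    simp only [Nat.add_sub_cancel]
    rw [ColAux.colCount_rec (d 0) k]
    by_cases hd0 : 1 ≤ d 0
    · rw [if_pos (h2.mpr ⟨hd0, hd1⟩), hB]
      have f0 : ((d - (Finsupp.single (0 : Fin 2) 1 + Finsupp.single (1 : Fin 2) 1) : Fin 2 →₀ ℕ)) 0 = d 0 - 1 := by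
        simp [Finsupp.sub_apply, Finsupp.single_apply]
      have f1 : ((d - (Finsupp.single (0 : Fin 2) 1 + Finsupp.single (1 : Fin 2) 1) : Fin 2 →₀ ℕ)) 1 = d 1 - 1 := by
        simp [Finsupp.sub_apply, Finsupp.single_apply]
      rw [f0, f1, hk]
      simp only [Nat.add_sub_cancel]
      rw [if_neg (by omega : ¬ d 0 = 0)]
      push_cast
      ring
    · have hle : ¬ (Finsupp.single (0 : Fin 2) 1 + Finsupp.single (1 : Fin 2) 1 ≤ d) :=
        fun hc => absurd (h2.mp hc).1 hd0
      have h00 : d 0 = 0 := by omega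
      rw [if_neg hle, if_pos h00]
      push_cast
      ring
  · have hle1 : ¬ (Finsupp.single (1 : Fin 2) 1 ≤ d) := fun hc => hd1 (h1.mp hc)
    have hle2 : ¬ (Finsupp.single (0 : Fin 2) 1 + Finsupp.single (1 : Fin 2) 1 ≤ d) :=
      fun hc => hd1 (h2.mp hc).2
    have h10 : d 1 = 0 := by omega
    rw [if_neg hle1, if_neg hle2, if_pos h10, hR, h10]
    ring
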